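/- arXiv:1705.05491 — 4 statements merged into one kernel-verified Lean document; each statement's English description precedes it below -/
import Mathlib

section
/- Let z_1, …, z_n be points in a Hilbert space and let γ > 0. Let z_* be a (1+γ)-approximate geometric median, i.e. ∑_{i=1}^n ‖z_* − z_i‖ ≤ (1+γ) · min_z ∑_{i=1}^n ‖z − z_i‖. For any α ∈ (0, 1/2) and any r ∈ ℝ, if at least (1−α)n of the points satisfy ‖z_i‖ ≤ r, then ‖z_*‖ ≤ C_α r + γ · (min_z ∑_{i=1}^n ‖z − z_i‖)/((1−2α)n) ≤ C_α r + γ · max_{1≤i≤n} ‖z_i‖/(1−2α), where C_α = 2(1−α)/(1−2α). -/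
open Finset

/-- Lemma 2.1 (robustness of approximate geometric medians): if `z⋆` is a
`(1+γ)`-approximate geometric median of `z 1, …, z n` in a Hilbert space, and at
least `(1-α) n` of the points have norm at most `r`, then
`‖z⋆‖ ≤ C_α r + γ ⬝ (min_z ∑ ‖z - zᵢ‖)/((1-2α) n) ≤ C_α r + γ ⬝ max ‖zᵢ‖/(1-2α)`,
where `C_α = 2(1-α)/(1-2α)`. -/
theorem geometric_median_robust
    {H : Type*} [NormedAddCommGroup H] [InnerProductSpace ℝ H] [CompleteSpace H]
    (n : ℕ) (hn : 0 < n) (z : Fin n → H) (γ : ℝ) (hγ : 0 < γ)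
    (zstar : H)
    (happrox : ∑ i, ‖zstar - z i‖ ≤ (1 + γ) * ⨅ y : H, ∑ i, ‖y - z i‖)
    (α : ℝ) (hα : α ∈ Set.Ioo (0 : ℝ) (1/2)) (r : ℝ)
    (hmaj : (1 - α) * n ≤ ({i | ‖z i‖ ≤ r} : Finset (Fin n)).card) :
    ‖zstar‖ ≤ (2 * (1 - α) / (1 - 2 * α)) * r
        + γ * (⨅ y : H, ∑ i, ‖y - z i‖) / ((1 - 2 * α) * n)
      ∧ (2 * (1 - α) / (1 - 2 * α)) * r
          + γ * (⨅ y : H, ∑ i, ‖y - z i‖) / ((1 - 2 * α) * n)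
        ≤ (2 * (1 - α) / (1 - 2 * α)) * r
          + γ * (⨆ i, ‖z i‖) / (1 - 2 * α) := by
  classical
  obtain ⟨hα0, hα2⟩ := hα
  have h2α : 0 < 1 - 2 * α := by linarith
  have npos : (0:ℝ) < n := by exact_mod_cast hn
  haveI : Nonempty (Fin n) := Fin.pos_iff_nonempty.mp hn
  set B := ‖zstar‖ with hB
  set M := ⨅ y : H, ∑ i, ‖y - z i‖ with hMdef
  set S : Finset (Fin n) := {i | ‖z i‖ ≤ r} with hSdef
  have hmem : ∀ i, i ∈ S ↔ ‖z i‖ ≤ r := by intro i; simp [hSdef]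
  have hbdd : BddBelow (Set.range fun y : H => ∑ i, ‖y - z i‖) :=
    ⟨0, by rintro x ⟨y, rfl⟩; positivity⟩
  have hM0 : 0 ≤ M := Real.iInf_nonneg fun y => by positivity
  have hscard : (1 - α) * n ≤ (S.card : ℝ) := hmaj
  have hSpos : (0:ℝ) < S.card := lt_of_lt_of_le (by nlinarith) hscard
  obtain ⟨j, hj⟩ := Finset.card_pos.mp (by exact_mod_cast hSpos)
  have hr0 : 0 ≤ r := le_trans (norm_nonneg (z j)) ((hmem j).mp hj)
  set T := ∑ i ∈ Sᶜ, ‖zstar - z i‖ with hT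
  have hle : S.card ≤ n := by
    simpa using Finset.card_le_univ S
  have hcards : (Sᶜ.card : ℝ) = (n : ℝ) - S.card := by
    have h := Finset.card_compl S
    simp only [Fintype.card_fin] at h
    rw [h, Nat.cast_sub hle]
  -- lower bound on the objective at zstar
  have h1 : (S.card : ℝ) * (B - r) + T ≤ ∑ i, ‖zstar - z i‖ := by
    have hs : ∑ i ∈ S, (B - r) ≤ ∑ i ∈ S, ‖zstar - z i‖ := by
      apply Finset.sum_le_sum
      intro i hi
      have h1 := norm_sub_norm_le zstar (z i)
      have h2 := (hmem i).mp hi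
      linarith
    have hsum : ∑ i ∈ S, ‖zstar - z i‖ + T = ∑ i, ‖zstar - z i‖ :=
      Finset.sum_add_sum_compl S _
    have hconst : ∑ i ∈ S, (B - r) = (S.card : ℝ) * (B - r) := by
      rw [Finset.sum_const, nsmul_eq_mul]
    linarith
  -- upper bound on M via the objective at 0
  have hM1 : M ≤ ∑ i, ‖z i‖ := by
    have := ciInf_le hbdd (0 : H)
    simpa using this
  have h3 : M ≤ (S.card : ℝ) * r + T + ((n : ℝ) - S.card) * B := by
    have hs : ∑ i ∈ S, ‖z i‖ ≤ (S.card : ℝ) * r := by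
      calc ∑ i ∈ S, ‖z i‖ ≤ ∑ i ∈ S, r :=
              Finset.sum_le_sum fun i hi => (hmem i).mp hi
        _ = (S.card : ℝ) * r := by rw [Finset.sum_const, nsmul_eq_mul]
    have hsc : ∑ i ∈ Sᶜ, ‖z i‖ ≤ T + ((n : ℝ) - S.card) * B := by
      calc ∑ i ∈ Sᶜ, ‖z i‖ ≤ ∑ i ∈ Sᶜ, (‖zstar - z i‖ + B) := by
              apply Finset.sum_le_sum
              intro i _
              have h1 := norm_sub_norm_le (z i) zstar
              rw [norm_sub_rev] at h1
              linarith
        _ = T + (Sᶜ.card : ℝ) * B := by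
              rw [Finset.sum_add_distrib, Finset.sum_const, nsmul_eq_mul]
        _ = T + ((n : ℝ) - S.card) * B := by rw [hcards]
    have hsum : ∑ i ∈ S, ‖z i‖ + ∑ i ∈ Sᶜ, ‖z i‖ = ∑ i, ‖z i‖ :=
      Finset.sum_add_sum_compl S _
    linarith
  have hkey : (2 * (S.card : ℝ) - n) * B ≤ 2 * (S.card : ℝ) * r + γ * M := by
    nlinarith [h1, h3, happrox]
  have main : (1 - 2*α) * n * B ≤ 2 * (1 - α) * n * r + γ * M := by
    rcases le_total B r with h | h
    · nlinarith [mul_pos h2α npos, mul_nonneg npos.le hr0, hM0, hγ.le]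
    · have h2s : (1 - 2*α) * n ≤ 2 * (S.card : ℝ) - n := by linarith
      have hmul : (1 - 2*α) * n * (B - r) ≤ (2 * (S.card : ℝ) - n) * (B - r) :=
        mul_le_mul_of_nonneg_right h2s (by linarith)
      nlinarith [hkey, hmul]
  have hden : (0:ℝ) < (1 - 2*α) * n := mul_pos h2α npos
  constructor
  · have heq : (2 * (1 - α) / (1 - 2 * α)) * r + γ * M / ((1 - 2 * α) * n)
        = (2 * (1 - α) * n * r + γ * M) / ((1 - 2 * α) * n) := by
      field_simp
    rw [heq, le_div_iff₀ hden]
    linarith [main]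
  · apply add_le_add_right
    have hsup : M ≤ (n : ℝ) * ⨆ i, ‖z i‖ := by
      calc M ≤ ∑ i, ‖z i‖ := hM1
        _ ≤ ∑ _i : Fin n, ⨆ j, ‖z j‖ :=
            Finset.sum_le_sum fun i _ =>
              le_ciSup (f := fun j => ‖z j‖) (Set.Finite.bddAbove (Set.finite_range _)) i
        _ = (n : ℝ) * ⨆ i, ‖z i‖ := by
            rw [Finset.sum_const, nsmul_eq_mul, Finset.card_univ, Fintype.card_fin]
    have heq2 : γ * ((n : ℝ) * ⨆ i, ‖z i‖) / ((1 - 2 * α) * n)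
        = γ * (⨆ i, ‖z i‖) / (1 - 2 * α) := by
      field_simp
    calc γ * M / ((1 - 2 * α) * n)
        ≤ γ * ((n : ℝ) * ⨆ i, ‖z i‖) / ((1 - 2 * α) * n) := by
          gcongr
        _ = γ * (⨆ i, ‖z i‖) / (1 - 2 * α) := heq2
end

section
/- Let F : Θ → ℝ be L-strongly convex and differentiable with M-Lipschitz gradient, minimized at θ* with ∇F(θ*) = 0. Suppose for each t ≥ 1 there is a function G_t : Θ → ℝ^d satisfying the uniform deviation bound ‖G_t(θ) − ∇F(θ)‖ ≤ ξ₁ + ξ₂‖θ − θ*‖ for all θ ∈ Θ, where ξ₁, ξ₂ ≥ 0 do not depend on t. Define iterates θ_t = θ_{t−1} − η G_t(θ_{t−1}) with η = L/(2M²). If ρ := 1 − √(1 − L²/(4M²)) − ξ₂L/(2M²) > 0, then for all t ≥ 1: ‖θ_t − θ*‖ ≤ (1 − ρ)^t ‖θ_0 − θ*‖ + ηξ₁/ρ. -/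
set_option maxHeartbeats 1600000 in
/-- Lemma 3.3: convergence of approximate gradient descent. If each approximate
gradient function `G t` satisfies the uniform deviation bound
`‖G t θ - ∇F θ‖ ≤ ξ₁ + ξ₂ ‖θ - θ*‖` on `Θ`, and
`ρ = 1 - √(1 - L²/(4M²)) - ξ₂ L/(2M²) > 0`, then the iterates
`θ_t = θ_{t-1} - η G t (θ_{t-1})` with `η = L/(2M²)` satisfy
`‖θ_t - θ*‖ ≤ (1-ρ)^t ‖θ_0 - θ*‖ + η ξ₁ / ρ`. -/
theorem approximate_gradient_descent_convergence
    (d : ℕ) (Θ : Set (EuclideanSpace ℝ (Fin d)))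
    (F : EuclideanSpace ℝ (Fin d) → ℝ)
    (gF : EuclideanSpace ℝ (Fin d) → EuclideanSpace ℝ (Fin d))
    (L M : ℝ) (hL : 0 < L) (hM : 0 < M)
    (hdiff : ∀ θ ∈ Θ, HasGradientAt F (gF θ) θ)
    (hstrong : ∀ θ ∈ Θ, ∀ θ' ∈ Θ,
      F θ + inner ℝ (gF θ) (θ' - θ) + L / 2 * ‖θ' - θ‖ ^ 2 ≤ F θ')
    (hlip : ∀ θ ∈ Θ, ∀ θ' ∈ Θ, ‖gF θ - gF θ'‖ ≤ M * ‖θ - θ'‖)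
    (θstar : EuclideanSpace ℝ (Fin d)) (hθstar : θstar ∈ Θ)
    (hgrad0 : gF θstar = 0)
    (ξ₁ ξ₂ : ℝ) (hξ₁ : 0 ≤ ξ₁) (hξ₂ : 0 ≤ ξ₂)
    (G : ℕ → EuclideanSpace ℝ (Fin d) → EuclideanSpace ℝ (Fin d))
    (hdev : ∀ t : ℕ, 1 ≤ t → ∀ θ ∈ Θ, ‖G t θ - gF θ‖ ≤ ξ₁ + ξ₂ * ‖θ - θstar‖)
    (η : ℝ) (hη : η = L / (2 * M ^ 2))
    (θseq : ℕ → EuclideanSpace ℝ (Fin d))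
    (hmem : ∀ t : ℕ, θseq t ∈ Θ)
    (hiter : ∀ t : ℕ, 1 ≤ t → θseq t = θseq (t - 1) - η • G t (θseq (t - 1)))
    (ρ : ℝ)
    (hρdef : ρ = 1 - Real.sqrt (1 - L ^ 2 / (4 * M ^ 2)) - ξ₂ * L / (2 * M ^ 2))
    (hρpos : 0 < ρ) :
    ∀ t : ℕ, 1 ≤ t →
      ‖θseq t - θstar‖ ≤ (1 - ρ) ^ t * ‖θseq 0 - θstar‖ + η * ξ₁ / ρ := by
  have hM2 : (0:ℝ) < M ^ 2 := by positivity
  have hη0 : 0 ≤ η := by rw [hη]; positivity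
  set B : ℝ := 1 - L ^ 2 / (4 * M ^ 2) with hB
  -- contraction of the exact gradient step
  have key : ∀ θ ∈ Θ, ‖θ - η • gF θ - θstar‖ ≤ Real.sqrt B * ‖θ - θstar‖ := by
    intro θ hθ
    have h1 : L * ‖θ - θstar‖ ^ 2 ≤ inner ℝ (gF θ) (θ - θstar) := by
      have hA := hstrong θ hθ θstar hθstar
      have hC := hstrong θstar hθstar θ (hθ)
      rw [hgrad0] at hC
      simp only [inner_zero_left] at hC
      have hnorm : ‖θstar - θ‖ = ‖θ - θstar‖ := norm_sub_rev _ _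
      have hinner : (inner ℝ (gF θ) (θstar - θ) : ℝ) = - inner ℝ (gF θ) (θ - θstar) := by
        rw [show θstar - θ = -(θ - θstar) by abel, inner_neg_right]
      rw [hnorm, hinner] at hA
      linarith
    have h2 : ‖gF θ‖ ≤ M * ‖θ - θstar‖ := by
      have := hlip θ hθ θstar hθstar
      rwa [hgrad0, sub_zero] at this
    have hsq : ‖θ - η • gF θ - θstar‖ ^ 2 ≤ B * ‖θ - θstar‖ ^ 2 := by
      have hrw : θ - η • gF θ - θstar = (θ - θstar) - η • gF θ := by abel
      rw [hrw, norm_sub_sq_real, real_inner_smul_right, norm_smul, Real.norm_eq_abs,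
        abs_of_nonneg hη0, real_inner_comm]
      have hg0 : 0 ≤ ‖gF θ‖ := norm_nonneg _
      have hu0 : 0 ≤ ‖θ - θstar‖ := norm_nonneg _
      have hgsq : ‖gF θ‖ ^ 2 ≤ M ^ 2 * ‖θ - θstar‖ ^ 2 := by nlinarith
      rw [hη, hB]
      rw [← sub_nonneg]
      have expand : (1 - L ^ 2 / (4 * M ^ 2)) * ‖θ - θstar‖ ^ 2 -
          (‖θ - θstar‖ ^ 2 - 2 * (L / (2 * M ^ 2) * inner ℝ (gF θ) (θ - θstar)) +
            (L / (2 * M ^ 2) * ‖gF θ‖) ^ 2)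
          = (L / (4 * M ^ 4)) * (4 * M ^ 2 * ((inner ℝ (gF θ) (θ - θstar) : ℝ) - L * ‖θ - θstar‖ ^ 2)
              + (4 * L * M ^ 2 * ‖θ - θstar‖ ^ 2 - L * M ^ 2 * ‖θ - θstar‖ ^ 2 - L * ‖gF θ‖ ^ 2)) := by
        field_simp
        ring
      rw [expand]
      have hterm1 : 0 ≤ (inner ℝ (gF θ) (θ - θstar) : ℝ) - L * ‖θ - θstar‖ ^ 2 := by linarith
      have hterm2 : 0 ≤ 4 * L * M ^ 2 * ‖θ - θstar‖ ^ 2 - L * M ^ 2 * ‖θ - θstar‖ ^ 2 - L * ‖gF θ‖ ^ 2 := by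
        nlinarith
      positivity
    rcases le_or_gt 0 B with hB0 | hB0
    · have h := Real.sqrt_le_sqrt hsq
      rwa [Real.sqrt_sq (norm_nonneg _), Real.sqrt_mul hB0,
        Real.sqrt_sq (norm_nonneg _)] at h
    · have hle : B * ‖θ - θstar‖ ^ 2 ≤ 0 :=
        mul_nonpos_of_nonpos_of_nonneg hB0.le (sq_nonneg _)
      have h0 : ‖θ - η • gF θ - θstar‖ ^ 2 = 0 :=
        le_antisymm (hsq.trans hle) (sq_nonneg _)
      have hv : ‖θ - η • gF θ - θstar‖ = 0 := by
        exact pow_eq_zero_iff (two_ne_zero) |>.mp h0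
      rw [hv, Real.sqrt_eq_zero_of_nonpos hB0.le, zero_mul]
  have hρB : 1 - ρ = Real.sqrt B + η * ξ₂ := by rw [hρdef, hη, hB]; ring
  have h1ρ : 0 ≤ 1 - ρ := by
    rw [hρB]; positivity
  -- one step bound
  have step : ∀ t : ℕ, 1 ≤ t →
      ‖θseq t - θstar‖ ≤ (1 - ρ) * ‖θseq (t - 1) - θstar‖ + η * ξ₁ := by
    intro t ht
    rw [hiter t ht]
    set θ := θseq (t - 1) with hθdef
    have hθΘ : θ ∈ Θ := hmem _
    have hrw : θ - η • G t θ - θstar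
        = (θ - η • gF θ - θstar) - η • (G t θ - gF θ) := by
      rw [smul_sub]; abel
    rw [hrw]
    have h3 : ‖(θ - η • gF θ - θstar) - η • (G t θ - gF θ)‖
        ≤ ‖θ - η • gF θ - θstar‖ + η * ‖G t θ - gF θ‖ := by
      have := norm_sub_le (θ - η • gF θ - θstar) (η • (G t θ - gF θ))
      rwa [norm_smul, Real.norm_eq_abs, abs_of_nonneg hη0] at this
    have h4 := key θ hθΘ
    have h5 : η * ‖G t θ - gF θ‖ ≤ η * (ξ₁ + ξ₂ * ‖θ - θstar‖) :=
      mul_le_mul_of_nonneg_left (hdev t ht θ hθΘ) hη0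
    have : (1 - ρ) * ‖θ - θstar‖ = Real.sqrt B * ‖θ - θstar‖ + η * ξ₂ * ‖θ - θstar‖ := by
      rw [hρB]; ring
    nlinarith
  -- main induction, for all t (including 0)
  have hεnn : 0 ≤ η * ξ₁ / ρ := by positivity
  have main : ∀ t : ℕ,
      ‖θseq t - θstar‖ ≤ (1 - ρ) ^ t * ‖θseq 0 - θstar‖ + η * ξ₁ / ρ := by
    intro t
    induction t with
    | zero => simp; linarith
    | succ n ih =>
      have hs := step (n + 1) (by omega)
      simp only [Nat.add_sub_cancel] at hs
      have hmul : (1 - ρ) * ‖θseq n - θstar‖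
          ≤ (1 - ρ) * ((1 - ρ) ^ n * ‖θseq 0 - θstar‖ + η * ξ₁ / ρ) :=
        mul_le_mul_of_nonneg_left ih h1ρ
      have hid : (1 - ρ) * ((1 - ρ) ^ n * ‖θseq 0 - θstar‖ + η * ξ₁ / ρ) + η * ξ₁
          = (1 - ρ) ^ (n + 1) * ‖θseq 0 - θstar‖ + η * ξ₁ / ρ := by
        field_simp
        ring
      linarith
  exact fun t _ => main t
end

section
/- Assume the distributed learning setup and Assumption 1 (F is L-strongly convex with M-Lipschitz gradient, minimized at θ* with ∇F(θ*) = 0). Fix α ∈ (0, 1/2), ξ₁, ξ₂ ≥ 0 and suppose the good event holds: at least k(1−α) + q of the batch deviation functions Z_ℓ satisfy C_α ‖Z_ℓ(θ)‖ ≤ ξ₂‖θ − θ*‖ + ξ₁ for all θ ∈ Θ, where C_α = 2(1−α)/(1−2α). Then for any Byzantine adversary (at each iteration t a set B_t of at most q machines reports arbitrary vectors), the Byzantine Gradient Descent iterates with step size η = L/(2M²) satisfy, whenever ρ := 1 − √(1 − L²/(4M²)) − ξ₂L/(2M²) > 0: ‖θ_t − θ*‖ ≤ (1 − ρ)^t ‖θ_0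 − θ*‖ + ηξ₁/ρ for all t ≥ 1. -/
open Finset
open scoped Classical
open scoped RealInnerProductSpace

lemma geo_median_bound {E : Type*} [NormedAddCommGroup E] [NormedSpace ℝ E]
    {k : ℕ} (hk : 0 < k) (z : Fin k → E) (med x : E) (r α : ℝ) (hr : 0 ≤ r)
    (hα2 : α < 1/2)
    (G : Finset (Fin k)) (hGcard : (k : ℝ) * (1 - α) ≤ G.card)
    (hG : ∀ ℓ ∈ G, ‖z ℓ - x‖ ≤ r)
    (hopt : ∑ ℓ, ‖med - z ℓ‖ ≤ ∑ ℓ, ‖x - z ℓ‖) :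
    ‖med - x‖ ≤ (2 * (1 - α) / (1 - 2 * α)) * r := by
  set D := ‖med - x‖ with hD
  have hD0 : 0 ≤ D := norm_nonneg _
  have hgnat : G.card ≤ k := by simpa using Finset.card_le_univ G
  have hg : (G.card : ℝ) ≤ k := by exact_mod_cast hgnat
  have h1 : ∀ ℓ ∈ G, D - r ≤ ‖med - z ℓ‖ := by
    intro ℓ hℓ
    have h2 := hG ℓ hℓ
    have h3 := norm_sub_norm_le (med - x) (z ℓ - x)
    simp only [sub_sub_sub_cancel_right] at h3
    have h5 : ‖x - z ℓ‖ = ‖z ℓ - x‖ := norm_sub_rev _ _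
    linarith
  have h2 : ∀ ℓ : Fin k, ‖x - z ℓ‖ - D ≤ ‖med - z ℓ‖ := by
    intro ℓ
    have h3 := norm_sub_norm_le (x - z ℓ) (med - z ℓ)
    have he : x - z ℓ - (med - z ℓ) = -(med - x) := by abel
    rw [he, norm_neg] at h3
    linarith
  have hsum1 : (G.card : ℝ) * (D - r) ≤ ∑ ℓ ∈ G, ‖med - z ℓ‖ := by
    calc (G.card : ℝ) * (D - r) = ∑ _ℓ ∈ G, (D - r) := by rw [Finset.sum_const, nsmul_eq_mul]
    _ ≤ _ := Finset.sum_le_sum h1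
  have hsum2 : ∑ ℓ ∈ Gᶜ, ‖x - z ℓ‖ - (Gᶜ.card : ℝ) * D ≤ ∑ ℓ ∈ Gᶜ, ‖med - z ℓ‖ := by
    have h := Finset.sum_le_sum (fun ℓ (_ : ℓ ∈ Gᶜ) => h2 ℓ)
    rw [Finset.sum_sub_distrib, Finset.sum_const, nsmul_eq_mul] at h
    exact h
  have hsum3 : ∑ ℓ ∈ G, ‖x - z ℓ‖ ≤ (G.card : ℝ) * r := by
    calc ∑ ℓ ∈ G, ‖x - z ℓ‖ ≤ ∑ _ℓ ∈ G, r := Finset.sum_le_sum (by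
        intro ℓ hℓ; rw [norm_sub_rev]; exact hG ℓ hℓ)
    _ = (G.card : ℝ) * r := by rw [Finset.sum_const, nsmul_eq_mul]
  have hcc : (Gᶜ.card : ℝ) = (k : ℝ) - G.card := by
    rw [Finset.card_compl, Fintype.card_fin, Nat.cast_sub hgnat]
  have hsplit : ∀ w : E, ∑ ℓ, ‖w - z ℓ‖ = ∑ ℓ ∈ G, ‖w - z ℓ‖ + ∑ ℓ ∈ Gᶜ, ‖w - z ℓ‖ := by
    intro w; rw [Finset.sum_add_sum_compl]
  rw [hsplit med, hsplit x] at hopt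
  have hkey : (2 * (G.card : ℝ) - k) * D ≤ 2 * G.card * r := by
    rw [hcc] at hsum2
    nlinarith [hopt, hsum1, hsum2, hsum3]
  have h2α : (0:ℝ) < 1 - 2 * α := by linarith
  have hkpos : (0:ℝ) < k := by exact_mod_cast hk
  have h2gk : (0:ℝ) < 2 * G.card - k := by nlinarith
  rw [div_mul_eq_mul_div, le_div_iff₀ h2α]
  nlinarith [mul_nonneg (le_of_lt h2α) (sub_nonneg.2 hkey),
    mul_nonneg hr (sub_nonneg.2 hGcard), h2gk, hD0]

lemma gd_contraction {E : Type*} [NormedAddCommGroup E] [InnerProductSpace ℝ E]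
    (u v : E) (L M η : ℝ) (hL : 0 < L) (hM : 0 < M) (hη : η = L / (2 * M ^ 2))
    (hinner : L * ‖u‖ ^ 2 ≤ ⟪v, u⟫)
    (hvnorm : ‖v‖ ≤ M * ‖u‖) :
    ‖u - η • v‖ ≤ Real.sqrt (1 - L ^ 2 / (4 * M ^ 2)) * ‖u‖ := by
  rcases eq_or_ne u 0 with hu | hu
  · have hv : v = 0 := by
      have h := hvnorm
      rw [hu, norm_zero, mul_zero] at h
      exact norm_le_zero_iff.mp h
    rw [hu, hv, smul_zero, sub_zero, norm_zero]; positivity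
  · set s := ‖u‖ with hs
    have hs0 : 0 < s := norm_pos_iff.mpr hu
    have hηpos : 0 < η := by rw [hη]; positivity
    have hLM : L ≤ M := by
      have h1 : ⟪v, u⟫ ≤ ‖v‖ * s := real_inner_le_norm v u
      have h2 : ‖v‖ * s ≤ M * s * s := mul_le_mul_of_nonneg_right hvnorm hs0.le
      nlinarith [mul_pos hs0 hs0]
    set c1 := L ^ 2 / (4 * M ^ 2) with hc1def
    have hc1 : 0 ≤ c1 := by positivity
    have hc0 : 0 ≤ 1 - c1 := by
      have h2 : L ^ 2 ≤ M ^ 2 := by nlinarith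
      have h4 : (0:ℝ) < 4 * M ^ 2 := by positivity
      rw [sub_nonneg, hc1def, div_le_one h4]
      nlinarith
    have hexp : ‖u - η • v‖ ^ 2 = s ^ 2 - 2 * η * ⟪v, u⟫ + η ^ 2 * ‖v‖ ^ 2 := by
      rw [norm_sub_sq_real, real_inner_smul_right, norm_smul, Real.norm_eq_abs,
        abs_of_pos hηpos, real_inner_comm]
      ring
    have hv2 : ‖v‖ ^ 2 ≤ M ^ 2 * s ^ 2 := by nlinarith [norm_nonneg v]
    have step1 : ‖u - η • v‖ ^ 2 ≤ s ^ 2 - 2 * η * (L * s ^ 2) + η ^ 2 * (M ^ 2 * s ^ 2) := by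
      rw [hexp]
      nlinarith [mul_le_mul_of_nonneg_left hinner hηpos.le,
        mul_le_mul_of_nonneg_left hv2 (sq_nonneg η)]
    have step2 : s ^ 2 - 2 * η * (L * s ^ 2) + η ^ 2 * (M ^ 2 * s ^ 2)
        = (1 - 3 * c1) * s ^ 2 := by
      rw [hη, hc1def]; field_simp; ring
    have step3 : (1 - 3 * c1) * s ^ 2 ≤ (1 - c1) * s ^ 2 := by
      nlinarith [hc1, sq_nonneg s]
    have hX : ‖u - η • v‖ ^ 2 ≤ (1 - c1) * s ^ 2 := by linarith
    calc ‖u - η • v‖ = Real.sqrt (‖u - η • v‖ ^ 2) := (Real.sqrt_sq (norm_nonneg _)).symm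
    _ ≤ Real.sqrt ((1 - c1) * s ^ 2) := Real.sqrt_le_sqrt hX
    _ = Real.sqrt (1 - c1) * s := by rw [Real.sqrt_mul hc0, Real.sqrt_sq hs0.le]

/-- Theorem 3.1: on the good event (at least `k(1-α)+q` batches have uniformly
accurate batch gradients), Byzantine Gradient Descent with step size
`η = L/(2M²)` converges at a linear rate `1-ρ` up to the error floor `η ξ₁/ρ`,
for any Byzantine adversary corrupting at most `q` machines per iteration. -/
theorem byzantine_gradient_descent_good_event
    (d k b q : ℕ) (hk : 0 < k) (hb : 0 < b)
    (Θ : Set (EuclideanSpace ℝ (Fin d)))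
    (F : EuclideanSpace ℝ (Fin d) → ℝ)
    (gF : EuclideanSpace ℝ (Fin d) → EuclideanSpace ℝ (Fin d))
    (L M : ℝ) (hL : 0 < L) (hM : 0 < M)
    (hdiff : ∀ θ ∈ Θ, HasGradientAt F (gF θ) θ)
    (hstrong : ∀ θ ∈ Θ, ∀ θ' ∈ Θ,
      F θ + inner ℝ (gF θ) (θ' - θ) + L / 2 * ‖θ' - θ‖ ^ 2 ≤ F θ')
    (hlip : ∀ θ ∈ Θ, ∀ θ' ∈ Θ, ‖gF θ - gF θ'‖ ≤ M * ‖θ - θ'‖)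
    (θstar : EuclideanSpace ℝ (Fin d)) (hθstar : θstar ∈ Θ)
    (hgrad0 : gF θstar = 0)
    -- local empirical gradient functions of the `m = k * b` machines,
    -- grouped into `k` batches of size `b`
    (gradf : Fin k × Fin b → EuclideanSpace ℝ (Fin d) → EuclideanSpace ℝ (Fin d))
    -- batch deviation functions
    (Z : Fin k → EuclideanSpace ℝ (Fin d) → EuclideanSpace ℝ (Fin d))
    (hZ : ∀ ℓ θ, Z ℓ θ = (b : ℝ)⁻¹ • ∑ j, gradf (ℓ, j) θ - gF θ)
    (α : ℝ) (hα : α ∈ Set.Ioo (0 : ℝ) (1/2))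
    (ξ₁ ξ₂ : ℝ) (hξ₁ : 0 ≤ ξ₁) (hξ₂ : 0 ≤ ξ₂)
    -- the good event
    (hgood : (k : ℝ) * (1 - α) + q ≤
      ({ℓ | ∀ θ ∈ Θ, (2 * (1 - α) / (1 - 2 * α)) * ‖Z ℓ θ‖ ≤ ξ₂ * ‖θ - θstar‖ + ξ₁}
        : Finset (Fin k)).card)
    (η : ℝ) (hη : η = L / (2 * M ^ 2))
    (ρ : ℝ)
    (hρdef : ρ = 1 - Real.sqrt (1 - L ^ 2 / (4 * M ^ 2)) - ξ₂ * L / (2 * M ^ 2))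
    (hρpos : 0 < ρ)
    -- an arbitrary Byzantine adversary: reported gradients, Byzantine sets,
    -- aggregated (geometric median) gradients, and resulting iterates
    (g : ℕ → Fin k × Fin b → EuclideanSpace ℝ (Fin d))
    (B : ℕ → Finset (Fin k × Fin b))
    (med : ℕ → EuclideanSpace ℝ (Fin d))
    (θseq : ℕ → EuclideanSpace ℝ (Fin d))
    (hmem : ∀ t : ℕ, θseq t ∈ Θ)
    (hBcard : ∀ t : ℕ, 1 ≤ t → (B t).card ≤ q)
    (hhonest : ∀ t : ℕ, 1 ≤ t → ∀ j ∉ B t, g t j = gradf j (θseq (t - 1)))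
    (hmed : ∀ t : ℕ, 1 ≤ t → ∀ y : EuclideanSpace ℝ (Fin d),
      ∑ ℓ : Fin k, ‖med t - (b : ℝ)⁻¹ • ∑ j, g t (ℓ, j)‖ ≤
        ∑ ℓ : Fin k, ‖y - (b : ℝ)⁻¹ • ∑ j, g t (ℓ, j)‖)
    (hiter : ∀ t : ℕ, 1 ≤ t → θseq t = θseq (t - 1) - η • med t) :
    ∀ t : ℕ, 1 ≤ t →
      ‖θseq t - θstar‖ ≤ (1 - ρ) ^ t * ‖θseq 0 - θstar‖ + η * ξ₁ / ρ := by
  obtain ⟨hα1, hα2⟩ := hα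
  have h2α : (0:ℝ) < 1 - 2 * α := by linarith
  have hCα : (0:ℝ) < 2 * (1 - α) / (1 - 2 * α) := by
    apply div_pos <;> linarith
  have hηpos : 0 < η := by rw [hη]; positivity
  -- per-step contraction
  have hstep : ∀ t : ℕ, 1 ≤ t →
      ‖θseq t - θstar‖ ≤ (1 - ρ) * ‖θseq (t - 1) - θstar‖ + η * ξ₁ := by
    intro t ht
    set θ := θseq (t - 1) with hθ
    have hθΘ : θ ∈ Θ := hmem _
    have hvn : ‖gF θ‖ ≤ M * ‖θ - θstar‖ := by
      have h := hlip θ hθΘ θstar hθstar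
      rwa [hgrad0, sub_zero] at h
    have hip : L * ‖θ - θstar‖ ^ 2 ≤ ⟪gF θ, θ - θstar⟫ := by
      have hs1 := hstrong θ hθΘ θstar hθstar
      have hs2 := hstrong θstar hθstar θ hθΘ
      rw [hgrad0] at hs2
      simp only [inner_zero_left] at hs2
      have he : ⟪gF θ, θstar - θ⟫ = -⟪gF θ, θ - θstar⟫ := by
        rw [show θstar - θ = -(θ - θstar) by abel, inner_neg_right]
      have hn : ‖θstar - θ‖ = ‖θ - θstar‖ := norm_sub_rev _ _
      rw [he, hn] at hs1
      linarith
    -- median accuracy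
    have hmedb : ‖med t - gF θ‖ ≤ ξ₂ * ‖θ - θstar‖ + ξ₁ := by
      set S : Finset (Fin k) :=
        ({ℓ | ∀ θ ∈ Θ, (2 * (1 - α) / (1 - 2 * α)) * ‖Z ℓ θ‖ ≤ ξ₂ * ‖θ - θstar‖ + ξ₁}
          : Finset (Fin k)) with hS
      set T : Finset (Fin k) := (B t).image Prod.fst with hT
      set G : Finset (Fin k) := S \ T with hG
      have hGcard : (k:ℝ) * (1 - α) ≤ G.card := by
        have h1 : S.card ≤ G.card + T.card := Finset.card_le_card_sdiff_add_card
        have h2 : T.card ≤ q := le_trans Finset.card_image_le (hBcard t ht)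
        have h3 : (S.card : ℝ) ≤ (G.card : ℝ) + q := by
          have : S.card ≤ G.card + q := by omega
          exact_mod_cast this
        linarith [hgood]
      set r := (ξ₂ * ‖θ - θstar‖ + ξ₁) / (2 * (1 - α) / (1 - 2 * α)) with hr
      have hrn : 0 ≤ r := by
        apply div_nonneg _ hCα.le
        have : 0 ≤ ξ₂ * ‖θ - θstar‖ := mul_nonneg hξ₂ (norm_nonneg _)
        linarith
      have key := geo_median_bound hk (fun ℓ => (b:ℝ)⁻¹ • ∑ j, g t (ℓ, j)) (med t)
        (gF θ) r α hrn hα2 G hGcard ?_ (hmed t ht (gF θ))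
      · have hCr : (2 * (1 - α) / (1 - 2 * α)) * r = ξ₂ * ‖θ - θstar‖ + ξ₁ := by
          rw [hr, mul_comm, div_mul_cancel₀ _ (ne_of_gt hCα)]
        rw [hCr] at key
        exact key
      · intro ℓ hℓ
        obtain ⟨hℓS, hℓT⟩ := Finset.mem_sdiff.mp hℓ
        have hhon : ∀ j, g t (ℓ, j) = gradf (ℓ, j) θ := by
          intro j
          apply hhonest t ht
          intro hmemB
          exact hℓT (Finset.mem_image_of_mem Prod.fst hmemB)
        have hsum : ∑ j, g t (ℓ, j) = ∑ j, gradf (ℓ, j) θ :=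
          Finset.sum_congr rfl (fun j _ => hhon j)
        have hz : (b:ℝ)⁻¹ • ∑ j, g t (ℓ, j) - gF θ = Z ℓ θ := by
          rw [hZ, hsum]
        show ‖(b:ℝ)⁻¹ • ∑ j, g t (ℓ, j) - gF θ‖ ≤ r
        rw [hz]
        have hpred : ∀ θ' ∈ Θ, (2 * (1 - α) / (1 - 2 * α)) * ‖Z ℓ θ'‖
            ≤ ξ₂ * ‖θ' - θstar‖ + ξ₁ := by
          rw [hS] at hℓS
          simpa using hℓS
        have hℓb := hpred θ hθΘ
        rw [hr, le_div_iff₀ hCα]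
        linarith [hℓb, mul_comm (‖Z ℓ θ‖) (2 * (1 - α) / (1 - 2 * α))]
    -- combine
    have hcon := gd_contraction (θ - θstar) (gF θ) L M η hL hM hη hip hvn
    have hrw : θseq t - θstar = (θ - θstar - η • gF θ) + η • (gF θ - med t) := by
      rw [hiter t ht, ← hθ, smul_sub]
      abel
    have h1ρ : Real.sqrt (1 - L ^ 2 / (4 * M ^ 2)) + η * ξ₂ = 1 - ρ := by
      rw [hρdef, hη]; ring
    calc ‖θseq t - θstar‖ ≤ ‖θ - θstar - η • gF θ‖ + ‖η • (gF θ - med t)‖ := by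
          rw [hrw]; exact norm_add_le _ _
    _ ≤ Real.sqrt (1 - L ^ 2 / (4 * M ^ 2)) * ‖θ - θstar‖
          + η * (ξ₂ * ‖θ - θstar‖ + ξ₁) := by
        rw [norm_smul, Real.norm_eq_abs, abs_of_pos hηpos, norm_sub_rev (gF θ) (med t)]
        exact add_le_add hcon (mul_le_mul_of_nonneg_left hmedb hηpos.le)
    _ = (Real.sqrt (1 - L ^ 2 / (4 * M ^ 2)) + η * ξ₂) * ‖θ - θstar‖ + η * ξ₁ := by ring
    _ = (1 - ρ) * ‖θ - θstar‖ + η * ξ₁ := by rw [h1ρ]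
  -- induction
  have h1ρ0 : 0 ≤ 1 - ρ := by
    rw [hρdef]
    have h1 := Real.sqrt_nonneg (1 - L ^ 2 / (4 * M ^ 2))
    have h2 : 0 ≤ ξ₂ * L / (2 * M ^ 2) := by positivity
    linarith
  have hρne : ρ ≠ 0 := ne_of_gt hρpos
  have hQ : ∀ t : ℕ, ‖θseq t - θstar‖ ≤
      (1 - ρ) ^ t * ‖θseq 0 - θstar‖ + η * ξ₁ / ρ * (1 - (1 - ρ) ^ t) := by
    intro t
    induction t with
    | zero => simp
    | succ n ih =>
      have hs := hstep (n + 1) (by omega)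
      simp only [Nat.add_sub_cancel] at hs
      have h2 := mul_le_mul_of_nonneg_left ih h1ρ0
      calc ‖θseq (n + 1) - θstar‖ ≤ (1 - ρ) * ‖θseq n - θstar‖ + η * ξ₁ := hs
      _ ≤ (1 - ρ) * ((1 - ρ) ^ n * ‖θseq 0 - θstar‖
            + η * ξ₁ / ρ * (1 - (1 - ρ) ^ n)) + η * ξ₁ := by linarith
      _ = (1 - ρ) ^ (n + 1) * ‖θseq 0 - θstar‖
            + η * ξ₁ / ρ * (1 - (1 - ρ) ^ (n + 1)) := by
          field_simp
          ring
  intro t _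
  have hpow : 0 ≤ (1 - ρ) ^ t := pow_nonneg h1ρ0 t
  have hc : 0 ≤ η * ξ₁ / ρ := by positivity
  have hfloor : η * ξ₁ / ρ * (1 - (1 - ρ) ^ t) ≤ η * ξ₁ / ρ := by nlinarith
  linarith [hQ t]
end

section
/- Let G₁ and G₂ be independent standard Gaussian real random variables, let γ, η ≥ 0 with τ² := γ + η > 0. Then for every λ with λ² ≤ 1/(64τ²): E[exp(λ(√γ (G₁² − 1) + √η G₁G₂))] ≤ exp(4λ²τ²). -/
open MeasureTheory ProbabilityTheory Real

private lemma exp_taylor_ineq {t : ℝ} (ht : |t| ≤ 17/64) : rexp (-t - t^2) ≤ 1 - t := by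
  obtain ⟨ht1, ht2⟩ := abs_le.mp ht
  set x : ℝ := -t - t^2 with hxdef
  have hxv : |x| ≤ 1377/4096 := by
    rw [abs_le]; constructor <;> nlinarith
  have hx1 : |x| ≤ 1 := le_trans hxv (by norm_num)
  have hb := Real.exp_bound hx1 (n := 3) (by norm_num)
  have h2 : rexp x - (1 + x + x^2/2) ≤ |x|^3 * (4 / (6 * 3)) := by
    have := (abs_le.mp hb).2
    simp only [Finset.sum_range_succ, Finset.sum_range_zero] at this
    norm_num at this ⊢
    convert this using 2 <;> norm_num [Nat.factorial]
  have habs : |x|^3 ≤ (1377/4096) * x^2 := by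
    have hx3 : |x|^3 = |x| * x^2 := by
      rw [pow_succ', sq_abs]
    rw [hx3]
    exact mul_le_mul_of_nonneg_right hxv (sq_nonneg _)
  have hexp : rexp x ≤ 1 + x + x^2/2 + (2/9) * ((1377/4096) * x^2) := by nlinarith
  have hxpoly : x^2 = t^2 * (1+t)^2 := by rw [hxdef]; ring
  have h1t : (1+t)^2 ≤ 6561/4096 := by nlinarith
  have hbd : x^2 ≤ t^2 * (6561/4096) := by
    rw [hxpoly]
    nlinarith [mul_le_mul_of_nonneg_left h1t (sq_nonneg t)]
  nlinarith [hexp, hbd]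

private lemma final_real_ineq {c d : ℝ} (h : c^2 + d^2 ≤ 1/64) :
    rexp (-c) * (Real.sqrt (1 - 2*(c + d^2/2)))⁻¹ ≤ rexp (4*(c^2+d^2)) := by
  have hd0 : 0 ≤ d^2 := sq_nonneg d
  have hc0 : 0 ≤ c^2 := sq_nonneg c
  have h1 : -(1/8) ≤ c := by nlinarith
  have h2 : c ≤ 1/8 := by nlinarith
  have hd2 : d^2 ≤ 1/64 := by nlinarith
  set t : ℝ := 2*c + d^2 with htdef
  have ht : |t| ≤ 17/64 := abs_le.mpr ⟨by nlinarith, by nlinarith⟩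
  have htpos : 0 < 1 - t := by nlinarith [abs_le.mp ht]
  have ht2 : t^2 ≤ 4*(c^2+d^2) := by nlinarith
  have hkey := exp_taylor_ineq ht
  have hsq : rexp (-2*c) ≤ rexp (8*(c^2+d^2)) * (1 - t) := by
    calc rexp (-2*c) = rexp (8*(c^2+d^2)) * rexp (-2*c - 8*(c^2+d^2)) := by
          rw [← Real.exp_add]; ring_nf
    _ ≤ rexp (8*(c^2+d^2)) * rexp (-t - t^2) := by
          have hle : -2*c - 8*(c^2+d^2) ≤ -t - t^2 := by nlinarith
          exact mul_le_mul_of_nonneg_left (Real.exp_le_exp.mpr hle) (Real.exp_nonneg _)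
    _ ≤ rexp (8*(c^2+d^2)) * (1 - t) :=
          mul_le_mul_of_nonneg_left hkey (Real.exp_nonneg _)
  have h1t : rexp (-c) ≤ rexp (4*(c^2+d^2)) * Real.sqrt (1 - t) := by
    have hs := Real.sqrt_le_sqrt hsq
    rw [show (-2*c : ℝ) = -c + -c by ring, Real.exp_add,
      Real.sqrt_mul_self (Real.exp_nonneg _)] at hs
    rwa [show rexp (8*(c^2+d^2)) = rexp (4*(c^2+d^2)) * rexp (4*(c^2+d^2)) by
        rw [← Real.exp_add]; ring_nf,
      Real.sqrt_mul (by positivity) (1-t), Real.sqrt_mul_self (Real.exp_nonneg _)] at hs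
  have hss : 0 < Real.sqrt (1 - t) := Real.sqrt_pos.mpr htpos
  have heq : 1 - 2*(c + d^2/2) = 1 - t := by rw [htdef]; ring
  rw [heq, ← div_eq_mul_inv, div_le_iff₀ hss]
  exact h1t

private lemma gauss_aux_lintegral (g : ℝ → ℝ) (hg : Measurable g) (hgnn : ∀ x, 0 ≤ g x)
    (hint : Integrable (fun x => gaussianPDFReal 0 1 x * g x)) :
    ∫⁻ x, ENNReal.ofReal (g x) ∂(gaussianReal 0 1)
      = ENNReal.ofReal (∫ x, gaussianPDFReal 0 1 x * g x) := by
  rw [gaussianReal_of_var_ne_zero 0 one_ne_zero,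
    lintegral_withDensity_eq_lintegral_mul _ (measurable_gaussianPDF 0 1) hg.ennreal_ofReal,
    ofReal_integral_eq_lintegral_ofReal hint
      (Filter.Eventually.of_forall fun x =>
        mul_nonneg (gaussianPDFReal_nonneg 0 1 x) (hgnn x))]
  refine lintegral_congr fun x => ?_
  simp [gaussianPDF, ENNReal.ofReal_mul (gaussianPDFReal_nonneg 0 1 x)]

private lemma gauss_pdf_eq (x : ℝ) :
    gaussianPDFReal 0 1 x = (Real.sqrt (2*π))⁻¹ * rexp (-(1/2) * x^2) := by
  simp only [gaussianPDFReal, NNReal.coe_one, mul_one, sub_zero]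
  congr 1
  ring

private lemma gauss_lin (b : ℝ) :
    ∫⁻ y, ENNReal.ofReal (rexp (b * y)) ∂(gaussianReal 0 1)
      = ENNReal.ofReal (rexp (b^2/2)) := by
  have hfun : ∀ y, gaussianPDFReal 0 1 y * rexp (b * y)
      = rexp (b^2/2) * ((Real.sqrt (2*π))⁻¹ * rexp (-(1/2) * (y - b)^2)) := by
    intro y
    rw [gauss_pdf_eq, mul_assoc, ← Real.exp_add,
      show rexp (b^2/2) * ((Real.sqrt (2*π))⁻¹ * rexp (-(1/2)*(y-b)^2))
        = (Real.sqrt (2*π))⁻¹ * rexp (b^2/2 + -(1/2)*(y-b)^2) by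
          rw [mul_left_comm, ← Real.exp_add]]
    congr 1
    ring
  have hint0 : Integrable (fun y : ℝ => rexp (-(1/2) * (y - b)^2)) :=
    Integrable.comp_sub_right (integrable_exp_neg_mul_sq (by norm_num : (0:ℝ) < 1/2)) b
  have hint : Integrable (fun y => gaussianPDFReal 0 1 y * rexp (b * y)) := by
    simp only [hfun]
    exact (hint0.const_mul _).const_mul _
  rw [gauss_aux_lintegral _ (by fun_prop) (fun x => Real.exp_nonneg _) hint]
  congr 1
  simp only [hfun]
  rw [integral_const_mul, integral_const_mul,
    integral_sub_right_eq_self (μ := volume) (fun y => rexp (-(1/2) * y^2)) b,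
    integral_gaussian, show π / (1/2) = 2*π by ring,
    inv_mul_cancel₀ (by positivity : Real.sqrt (2*π) ≠ 0), mul_one]

private lemma gauss_quad {a : ℝ} (ha : a < 1/2) :
    ∫⁻ x, ENNReal.ofReal (rexp (a * x^2)) ∂(gaussianReal 0 1)
      = ENNReal.ofReal ((Real.sqrt (1 - 2*a))⁻¹) := by
  have hb : (0:ℝ) < 1/2 - a := by linarith
  have hfun : ∀ x, gaussianPDFReal 0 1 x * rexp (a * x^2)
      = (Real.sqrt (2*π))⁻¹ * rexp (-(1/2 - a) * x^2) := by
    intro x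
    rw [gauss_pdf_eq, mul_assoc, ← Real.exp_add]
    congr 1
    ring
  have hint : Integrable (fun x => gaussianPDFReal 0 1 x * rexp (a * x^2)) := by
    simp only [hfun]
    exact (integrable_exp_neg_mul_sq hb).const_mul _
  rw [gauss_aux_lintegral _ (by fun_prop) (fun x => Real.exp_nonneg _) hint]
  congr 1
  simp only [hfun]
  rw [integral_const_mul, integral_gaussian]
  have hπ := Real.pi_pos
  have s2 : (0:ℝ) < Real.sqrt 2 := Real.sqrt_pos.mpr (by norm_num)
  have sπ : (0:ℝ) < Real.sqrt π := Real.sqrt_pos.mpr hπ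
  have sb : (0:ℝ) < Real.sqrt (1/2 - a) := Real.sqrt_pos.mpr hb
  have h12 : (1:ℝ) - 2*a > 0 := by linarith
  rw [show ((Real.sqrt (2*π))⁻¹ : ℝ) = Real.sqrt ((2*π)⁻¹) from (Real.sqrt_inv _).symm,
    ← Real.sqrt_mul (by positivity),
    show ((2*π)⁻¹ * (π/(1/2 - a)) : ℝ) = (1 - 2*a)⁻¹ by
      rw [div_eq_mul_inv, ← mul_assoc,
        show ((2*π)⁻¹ * π : ℝ) = 2⁻¹ by field_simp, ← mul_inv]
      congr 1
      ring, Real.sqrt_inv]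

/-- The moment generating function bound used in the verification of
Assumption 3 for linear regression: for independent standard Gaussians
`G₁, G₂`, and `γ, η ≥ 0` with `τ² = γ + η > 0`, for every `λ² ≤ 1/(64τ²)`,
`E[exp(λ(√γ(G₁² - 1) + √η G₁G₂))] ≤ exp(4λ²τ²)`. -/
theorem mgf_chi_square_plus_product_bound
    {Ω : Type*} [MeasurableSpace Ω] (P : Measure Ω) [IsProbabilityMeasure P]
    (G₁ G₂ : Ω → ℝ) (hG₁meas : Measurable G₁) (hG₂meas : Measurable G₂)
    (hG₁ : Measure.map G₁ P = gaussianReal 0 1)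
    (hG₂ : Measure.map G₂ P = gaussianReal 0 1)
    (hindep : IndepFun G₁ G₂ P)
    (γ η τ : ℝ) (hγ : 0 ≤ γ) (hη : 0 ≤ η)
    (hτ : τ ^ 2 = γ + η) (hτpos : 0 < τ) :
    ∀ l : ℝ, l ^ 2 ≤ 1 / (64 * τ ^ 2) →
      ∫ ω, Real.exp (l * (Real.sqrt γ * (G₁ ω ^ 2 - 1) + Real.sqrt η * G₁ ω * G₂ ω)) ∂P
        ≤ Real.exp (4 * l ^ 2 * τ ^ 2) := by
  intro l hl
  set c := l * Real.sqrt γ with hc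
  set d := l * Real.sqrt η with hd
  have hcd : c^2 + d^2 = l^2 * τ^2 := by
    rw [hc, hd, mul_pow, mul_pow, Real.sq_sqrt hγ, Real.sq_sqrt hη, hτ]; ring
  have hm : c^2 + d^2 ≤ 1/64 := by
    rw [hcd]
    have hτ2 : (0:ℝ) < τ^2 := by positivity
    have := mul_le_mul_of_nonneg_right hl hτ2.le
    calc l^2 * τ^2 ≤ 1/(64*τ^2) * τ^2 := this
    _ = 1/64 := by field_simp
  have hd64 : d^2 ≤ 1/64 := by nlinarith [sq_nonneg c]
  have hc8 : c ≤ 1/8 := by nlinarith [sq_nonneg d]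
  have ha : c + d^2/2 < 1/2 := by nlinarith
  have hpt : ∀ x y : ℝ,
      l * (Real.sqrt γ * (x^2 - 1) + Real.sqrt η * x * y) = c * (x^2 - 1) + d * (x * y) := by
    intro x y; rw [hc, hd]; ring
  have hF : Measurable
      (fun p : ℝ × ℝ => ENNReal.ofReal (rexp (c * (p.1^2 - 1) + d * (p.1 * p.2)))) := by
    fun_prop
  have hmap : Measure.map (fun ω => (G₁ ω, G₂ ω)) P
      = (gaussianReal 0 1).prod (gaussianReal 0 1) := by
    have h := (indepFun_iff_map_prod_eq_prod_map_map hG₁meas.aemeasurable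
      hG₂meas.aemeasurable).mp hindep
    rw [hG₁, hG₂] at h
    exact h
  have key : ∫⁻ ω, ENNReal.ofReal (rexp (c * (G₁ ω ^ 2 - 1) + d * (G₁ ω * G₂ ω))) ∂P
      = ENNReal.ofReal (rexp (-c) * (Real.sqrt (1 - 2*(c + d^2/2)))⁻¹) := by
    calc ∫⁻ ω, ENNReal.ofReal (rexp (c * (G₁ ω ^ 2 - 1) + d * (G₁ ω * G₂ ω))) ∂P
        = ∫⁻ p : ℝ × ℝ, ENNReal.ofReal (rexp (c * (p.1^2 - 1) + d * (p.1 * p.2)))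
            ∂((gaussianReal 0 1).prod (gaussianReal 0 1)) := by
          rw [← hmap, lintegral_map hF (hG₁meas.prodMk hG₂meas)]
    _ = ∫⁻ x, ∫⁻ y, ENNReal.ofReal (rexp (c * (x^2 - 1) + d * (x * y)))
            ∂(gaussianReal 0 1) ∂(gaussianReal 0 1) := lintegral_prod _ hF.aemeasurable
    _ = ∫⁻ x, ENNReal.ofReal (rexp (-c)) * ENNReal.ofReal (rexp ((c + d^2/2) * x^2))
            ∂(gaussianReal 0 1) := by
          refine lintegral_congr fun x => ?_
          have hsplit : ∀ y : ℝ, ENNReal.ofReal (rexp (c * (x^2 - 1) + d * (x * y)))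
              = ENNReal.ofReal (rexp (c * (x^2 - 1))) * ENNReal.ofReal (rexp ((d * x) * y)) := by
            intro y
            rw [show c * (x^2 - 1) + d * (x * y) = c * (x^2 - 1) + (d * x) * y by ring,
              Real.exp_add, ENNReal.ofReal_mul (Real.exp_nonneg _)]
          simp only [hsplit]
          rw [lintegral_const_mul _ (by fun_prop), gauss_lin (d*x),
            ← ENNReal.ofReal_mul (Real.exp_nonneg _), ← Real.exp_add,
            ← ENNReal.ofReal_mul (Real.exp_nonneg _), ← Real.exp_add]
          congr 2
          ring
    _ = ENNReal.ofReal (rexp (-c))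
          * ∫⁻ x, ENNReal.ofReal (rexp ((c + d^2/2) * x^2)) ∂(gaussianReal 0 1) :=
          lintegral_const_mul _ (by fun_prop)
    _ = ENNReal.ofReal (rexp (-c)) * ENNReal.ofReal ((Real.sqrt (1 - 2*(c + d^2/2)))⁻¹) := by
          rw [gauss_quad ha]
    _ = ENNReal.ofReal (rexp (-c) * (Real.sqrt (1 - 2*(c + d^2/2)))⁻¹) :=
          (ENNReal.ofReal_mul (Real.exp_nonneg _)).symm
  have hmeas : AEStronglyMeasurable
      (fun ω => rexp (c * (G₁ ω ^ 2 - 1) + d * (G₁ ω * G₂ ω))) P :=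
    Measurable.aestronglyMeasurable (by fun_prop)
  simp only [hpt]
  rw [integral_eq_lintegral_of_nonneg_ae
    (Filter.Eventually.of_forall fun ω => Real.exp_nonneg _) hmeas, key,
    ENNReal.toReal_ofReal (by positivity)]
  calc rexp (-c) * (Real.sqrt (1 - 2*(c + d^2/2)))⁻¹
      ≤ rexp (4*(c^2+d^2)) := final_real_ineq hm
  _ = rexp (4 * l^2 * τ^2) := by rw [hcd]; ring_nf
end
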